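/- Existence of typing for β-normalizable terms in the model E: if a λ-term M has a β-normal form, then there exist an environment Γ and a type α in the relational graph model E = (N, ∅)‾ (free completion of the partial pair with atoms ℕ and empty injection) such that Γ ⊢_E M : α, where the empty multiset ∅ does not occur positively in α and does not occur negatively in any type of Γ. -/

import Mathlib

/-- Untyped λ⊥-terms in de Bruijn notation, intrinsically scoped:
`Tm n` is the set of λ⊥-terms with free variables among `x₀,…,x_{n-1}`. -/
inductive Tm : ℕ → Type
  | var : ∀ {n : ℕ}, Fin n → Tm n
  | lam : ∀ {n : ℕ}, Tm (n + 1) → Tm n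
  | app : ∀ {n : ℕ}, Tm n → Tm n → Tm n
  | bot : ∀ {n : ℕ}, Tm n

/-- Renaming of free variables. -/
def Tm.rename : ∀ {n m : ℕ}, (Fin n → Fin m) → Tm n → Tm m
  | _, _, f, .var k => .var (f k)
  | _, m, f, .lam t =>
      .lam (t.rename fun k => Fin.cases (motive := fun _ => Fin (m + 1)) 0
        (fun j => (f j).succ) k)
  | _, _, f, .app t u => .app (t.rename f) (u.rename f)
  | _, _, _, .bot => .bot

/-- Simultaneous (capture-avoiding) substitution. -/
def Tm.subst : ∀ {n m : ℕ}, (Fin n → Tm m) → Tm n → Tm m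
  | _, _, σ, .var k => σ k
  | _, m, σ, .lam t =>
      .lam (t.subst fun k => Fin.cases (motive := fun _ => Tm (m + 1)) (.var 0)
        (fun j => (σ j).rename Fin.succ) k)
  | _, _, σ, .app t u => .app (t.subst σ) (u.subst σ)
  | _, _, _, .bot => .bot

/-- Substitution `M{N/y}` of `N` for the 0-th free variable of `M`. -/
def Tm.subst1 {n : ℕ} (M : Tm (n + 1)) (N : Tm n) : Tm n :=
  M.subst (Fin.cases (motive := fun _ => Tm n) N Tm.var)

/-- One-step β-reduction (contextual closure of `(λx.M)N → M{N/x}`). -/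
inductive Beta : ∀ {n : ℕ}, Tm n → Tm n → Prop
  | redex {n} (M : Tm (n + 1)) (N : Tm n) : Beta (.app (.lam M) N) (M.subst1 N)
  | appL {n} {M M' N : Tm n} : Beta M M' → Beta (.app M N) (.app M' N)
  | appR {n} {M N N' : Tm n} : Beta N N' → Beta (.app M N) (.app M N')
  | lam {n} {M M' : Tm (n + 1)} : Beta M M' → Beta (.lam M) (.lam M')

/-- A λ⊥-term is a λ-term when it contains no occurrence of `⊥`. -/
def BotFree : ∀ {n : ℕ}, Tm n → Prop
  | _, .var _ => True
  | _, .lam M => BotFree M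
  | _, .app M N => BotFree M ∧ BotFree N
  | _, .bot => False

/-- The environment assigning the multiset `[α]` to the variable `k` and `0` elsewhere. -/
def single {D : Type} {n : ℕ} (k : Fin n) (α : D) : Fin n → Multiset D :=
  fun j => if j = k then {α} else 0

/-- The relational interpretation `⟦M⟧_{x̄} ⊆ M_f(D)ⁿ × D` of a λ⊥-term in a relational
graph model `(D, i)`. -/
def Interp {D : Type} (i : Multiset D × D → D) :
    ∀ {n : ℕ}, Tm n → Set ((Fin n → Multiset D) × D)
  | _, .var k => {p | ∃ α, p = (single k α, α)}
  | _, .lam M => {p | ∃ Γ a α, (Fin.cons a Γ, α) ∈ Interp i M ∧ p = (Γ, i (a, α))}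
  | n, .app M N =>
      {p | ∃ (Γ₀ : Fin n → Multiset D) (l : List ((Fin n → Multiset D) × D)),
        (Γ₀, i (↑(l.map Prod.snd), p.2)) ∈ Interp i M ∧
        (∀ q ∈ l, q ∈ Interp i N) ∧ p.1 = Γ₀ + (l.map Prod.fst).sum}
  | _, .bot => ∅

/-- The non-idempotent intersection type system associated with a relational graph model
`(D, i)`: `Der i Γ M α m` states that the judgment `Γ ⊢ M : α` is derivable by a
derivation `π` with `#app(π) = m` occurrences of the application rule. -/
inductive Der {D : Type} (i : Multiset D × D → D) :
    ∀ {n : ℕ}, (Fin n → Multiset D) → Tm n → D → ℕ → Prop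
  | var {n} (k : Fin n) (α : D) : Der i (single k α) (.var k) α 0
  | lam {n} {Γ : Fin n → Multiset D} {a : Multiset D} {M : Tm (n + 1)} {α : D} {m : ℕ} :
      Der i (Fin.cons a Γ) M α m → Der i Γ (.lam M) (i (a, α)) m
  | app {n} {Γ : Fin n → Multiset D} {M N : Tm n} {α : D} {m : ℕ}
      (l : List ((Fin n → Multiset D) × D × ℕ)) :
      Der i Γ M (i (↑(l.map fun q => q.2.1), α)) m →
      (∀ q ∈ l, Der i q.1 N q.2.1 q.2.2) →
      Der i (Γ + (l.map fun q => q.1).sum) (.app M N) α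
        (m + (l.map fun q => q.2.2).sum + 1)

/-- Pre-types of the relational graph model `E`, the free completion of the partial pair
`(ℕ, ∅)`: atoms `ξ_k` and arrows `a → α` with `a` a finite multiset of pre-types
(represented as a list). -/
inductive PreE : Type
  | atom : ℕ → PreE
  | node : List PreE → PreE → PreE

/-- Permutation congruence on pre-types: lists represent finite multisets. -/
inductive EqvE : PreE → PreE → Prop
  | refl (t) : EqvE t t
  | symm {s t} : EqvE s t → EqvE t s
  | trans {s t u} : EqvE s t → EqvE t u → EqvE s u
  | perm {l₁ l₂ t} : List.Perm l₁ l₂ → EqvE (.node l₁ t) (.node l₂ t)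
  | congHead {l t₁ t₂} : EqvE t₁ t₂ → EqvE (.node l t₁) (.node l t₂)
  | congArg {x y l t} : EqvE x y → EqvE (.node (x :: l) t) (.node (y :: l) t)

def ESetoid : Setoid PreE := ⟨EqvE, ⟨EqvE.refl, EqvE.symm, EqvE.trans⟩⟩

/-- The set of elements (types) of the model `E`. -/
def ETy : Type := Quotient ESetoid

/-- The (injective) arrow constructor `i : M_f(E) × E → E` of the model `E`. -/
noncomputable def arrE (p : Multiset ETy × ETy) : ETy :=
  Quotient.mk ESetoid (PreE.node (p.1.toList.map Quotient.out) p.2.out)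

/-- Polarized occurrences of the empty multiset in a pre-type: `Occ true` is a positive
occurrence, `Occ false` a negative one.  The empty multiset occurs negatively in
`∅ → β`; occurrences in the target of an arrow keep their polarity; occurrences in a
member of the source multiset of an arrow flip their polarity. -/
inductive Occ : Bool → PreE → Prop
  | negEmpty (t) : Occ false (.node [] t)
  | tail {p l t} : Occ p t → Occ p (.node l t)
  | arg {p β l t} : Occ (!p) β → β ∈ l → Occ p (.node l t)

/-- Polarized occurrences of the empty multiset in an element of `E`. -/
def OccQ (p : Bool) (x : ETy) : Prop := ∃ t : PreE, x = Quotient.mk ESetoid t ∧ Occ p t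

section Env
variable {D : Type} {n m : ℕ}

abbrev Env (D : Type) (n : ℕ) := Fin n → Multiset D

def liftf (f : Fin n → Fin m) : Fin (n+1) → Fin (m+1) :=
  fun k => Fin.cases (motive := fun _ => Fin (m + 1)) 0 (fun j => (f j).succ) k

def liftσ (σ : Fin n → Tm m) : Fin (n+1) → Tm (m+1) :=
  fun k => Fin.cases (motive := fun _ => Tm (m + 1)) (.var 0) (fun j => (σ j).rename Fin.succ) k

lemma rename_lam (f : Fin n → Fin m) (t : Tm (n+1)) :
    (Tm.lam t).rename f = .lam (t.rename (liftf f)) := rfl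

lemma subst_lam (σ : Fin n → Tm m) (t : Tm (n+1)) :
    (Tm.lam t).subst σ = .lam (t.subst (liftσ σ)) := rfl

def ren (f : Fin n → Fin m) (Γ : Env D n) : Env D m :=
  fun j => ∑ k, if f k = j then Γ k else 0

lemma ren_single (f : Fin n → Fin m) (k : Fin n) (α : D) :
    ren f (single k α) = single (f k) α := by
  funext j
  simp only [ren, single]
  rw [Finset.sum_eq_single k]
  · by_cases h : f k = j
    · simp [h]
    · simp [h, Ne.symm h]
  · intro b _ hb
    by_cases h : f b = j <;> simp [h, hb]
  · simp

lemma ren_zero (f : Fin n → Fin m) : ren f (0 : Env D n) = 0 := by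
  funext j; simp [ren]

lemma ren_add (f : Fin n → Fin m) (Γ Δ : Env D n) :
    ren f (Γ + Δ) = ren f Γ + ren f Δ := by
  funext j
  simp only [ren, Pi.add_apply, ← Finset.sum_add_distrib]
  congr 1; funext k; by_cases h : f k = j <;> simp [h]

lemma cons_add_cons (a b : Multiset D) (Γ Δ : Env D n) :
    (Fin.cons a Γ + Fin.cons b Δ : Env D (n+1)) = Fin.cons (a+b) (Γ+Δ) := by
  funext j
  refine Fin.cases ?_ (fun i => ?_) j <;> simp

lemma cons_zero_zero : (Fin.cons 0 0 : Env D (n+1)) = 0 := by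
  funext j; refine Fin.cases ?_ (fun i => ?_) j <;> simp

lemma ren_liftf_cons (f : Fin n → Fin m) (a : Multiset D) (Γ : Env D n) :
    ren (liftf f) (Fin.cons a Γ) = Fin.cons a (ren f Γ) := by
  funext j
  refine Fin.cases ?_ (fun i => ?_) j
  · simp only [ren, Fin.cons_zero]
    rw [Fin.sum_univ_succ]
    simp [liftf, Fin.succ_ne_zero]
  · simp only [ren, Fin.cons_succ]
    rw [Fin.sum_univ_succ]
    have h0 : (liftf f 0 : Fin (m+1)) = 0 := rfl
    have h1 : (liftf f 0 : Fin (m+1)) ≠ i.succ := by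
      rw [h0]; exact fun h => (Fin.succ_ne_zero i) h.symm
    rw [if_neg h1, zero_add]
    simp only [liftf, Fin.cases_succ, Fin.cons_succ, ren]
    refine Finset.sum_congr rfl (fun k _ => ?_)
    by_cases h : f k = i
    · simp [h]
    · simp [h, fun hh => h (Fin.succ_injective _ hh)]

lemma ren_succ (Γ : Env D n) : ren Fin.succ Γ = Fin.cons 0 Γ := by
  funext j
  refine Fin.cases ?_ (fun i => ?_) j
  · simp [ren, Fin.succ_ne_zero]
  · simp only [ren, Fin.cons_succ]
    rw [Finset.sum_eq_single i]
    · simp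
    · intro b _ hb
      simp [Fin.succ_inj, hb]
    · simp

lemma single_succ (k : Fin n) (β : D) :
    (single (Fin.succ k) β : Env D (n+1)) = Fin.cons 0 (single k β) := by
  funext j
  refine Fin.cases ?_ (fun i => ?_) j
  · simp [single, (Fin.succ_ne_zero k).symm]
  · simp [single, Fin.succ_inj]

end Env
section Sub
variable {D : Type} {i : Multiset D × D → D} {n m : ℕ}

lemma ren_listsum (f : Fin n → Fin m) (L : List (Env D n)) :
    ren f L.sum = (L.map (ren f)).sum := by
  induction L with
  | nil => simp [ren_zero]
  | cons a L ih => simp [ren_add, ih]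

theorem Der.rename {Γ : Env D n} {M : Tm n} {α : D} {c : ℕ}
    (h : Der i Γ M α c) : ∀ {m : ℕ} (f : Fin n → Fin m),
    Der i (ren f Γ) (M.rename f) α c := by
  induction h with
  | var k α => intro m f; rw [ren_single]; exact Der.var (f k) α
  | lam h ih =>
      intro m f
      rw [rename_lam]
      exact Der.lam (by rw [← ren_liftf_cons]; exact ih (liftf f))
  | @app n Γ M N α c l hM hN ihM ihN =>
      intro m f
      have e1 : ((l.map (fun q => (ren f q.1, q.2.1, q.2.2))).map fun q => q.2.1)
          = l.map fun q => q.2.1 := by simp [List.map_map]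
      have e2 : ((l.map (fun q => (ren f q.1, q.2.1, q.2.2))).map fun q => q.1)
          = (l.map fun q => q.1).map (ren f) := by simp [List.map_map]
      have e3 : ((l.map (fun q => (ren f q.1, q.2.1, q.2.2))).map fun q => q.2.2)
          = l.map fun q => q.2.2 := by simp [List.map_map]
      have := Der.app (i := i) (Γ := ren f Γ) (M := M.rename f) (N := N.rename f)
        (l.map (fun q => (ren f q.1, q.2.1, q.2.2)))
        (by rw [e1]; exact ihM f)
        (by
          intro q hq
          simp only [List.mem_map] at hq
          obtain ⟨q', hq', rfl⟩ := hq
          exact ihN q' hq' f)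
      rw [e2, e3, ← ren_listsum, ← ren_add] at this
      exact this

lemma der_var_inv {Γ : Env D n} {k : Fin n} {α : D} {c : ℕ}
    (h : Der i Γ (.var k) α c) : Γ = single k α ∧ c = 0 := by
  cases h; exact ⟨rfl, rfl⟩

lemma der_bot_inv {Γ : Env D n} {α : D} {c : ℕ} (h : Der i Γ (.bot) α c) : False := by
  cases h

lemma der_lam_inv {Γ : Env D n} {M : Tm (n+1)} {δ : D} {c : ℕ}
    (h : Der i Γ (.lam M) δ c) :
    ∃ a α, δ = i (a, α) ∧ Der i (Fin.cons a Γ) M α c := by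
  cases h with
  | lam h => exact ⟨_, _, rfl, h⟩

lemma der_app_inv {Γ : Env D n} {M N : Tm n} {α : D} {c : ℕ}
    (h : Der i Γ (.app M N) α c) :
    ∃ (Γ₀ : Env D n) (l : List (Env D n × D × ℕ)) (c₀ : ℕ),
      Γ = Γ₀ + (l.map fun q => q.1).sum ∧ c = c₀ + (l.map fun q => q.2.2).sum + 1 ∧
      Der i Γ₀ M (i (↑(l.map fun q => q.2.1), α)) c₀ ∧
      ∀ q ∈ l, Der i q.1 N q.2.1 q.2.2 := by
  cases h with
  | app l hM hN => exact ⟨_, l, _, rfl, rfl, hM, hN⟩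

/-- Derivations of a substitution: `DerSub i σ Γ Δ` means that for each typed
occurrence `(k, β)` in the environment `Γ` there is a derivation of `σ k : β`, with
environments summing to `Δ`. -/
inductive DerSub (i : Multiset D × D → D) {n m : ℕ} (σ : Fin n → Tm m) :
    Env D n → Env D m → Prop
  | nil : DerSub i σ 0 0
  | cons {Γ Δ₂} (k : Fin n) (β : D) {Δ₁ : Env D m} {c₁ : ℕ} :
      Der i Δ₁ (σ k) β c₁ → DerSub i σ Γ Δ₂ → DerSub i σ (Γ + single k β) (Δ₁ + Δ₂)

lemma DerSub.append {σ : Fin n → Tm m} {Γ₁ Γ₂ : Env D n} {Δ₁ Δ₂ : Env D m}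
    (h₁ : DerSub i σ Γ₁ Δ₁) (h₂ : DerSub i σ Γ₂ Δ₂) :
    DerSub i σ (Γ₁ + Γ₂) (Δ₁ + Δ₂) := by
  induction h₁ with
  | nil => rw [zero_add, zero_add]; exact h₂
  | @cons Γ₁' Δ₂' k β Δ₁' c₁ hd _ ih =>
      rw [add_right_comm Γ₁' (single k β) Γ₂, add_assoc Δ₁' Δ₂' Δ₂]
      exact DerSub.cons k β hd ih

lemma DerSub.zero_inv {σ : Fin n → Tm m} {Γ : Env D n} {Δ : Env D m}
    (h : DerSub i σ Γ Δ) (hΓ : Γ = 0) : Δ = 0 := by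
  induction h with
  | nil => rfl
  | cons k β hd _ ih =>
      exfalso
      have := congrFun hΓ k
      simp [single] at this

lemma DerSub.single_inv {σ : Fin n → Tm m} {Γ : Env D n} {Δ : Env D m}
    (h : DerSub i σ Γ Δ) : ∀ (k : Fin n) (α : D), Γ = single k α →
    ∃ c, Der i Δ (σ k) α c := by
  induction h with
  | nil =>
      intro k α hΓ
      exfalso
      have := congrFun hΓ k
      simp [single] at this
  | @cons Γ Δ₂ k' β Δ₁ c₁ hd hsub ih =>
      intro k α hΓ
      have hkk : k' = k := by
        by_contra hne
        have h2 := congrFun hΓ k'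
        simp [single, hne] at h2
      subst hkk
      have hk := congrFun hΓ k'
      simp [single] at hk
      have h1 : Multiset.card (Γ k' + {β}) = Multiset.card ({α} : Multiset D) := by rw [hk]
      simp at h1
      rw [h1, zero_add] at hk
      have hβα : β = α := by simpa using hk
      subst hβα
      have hΓ' : Γ = 0 := by
        funext j
        by_cases hj : j = k'
        · simp [hj, h1]
        · have h3 := congrFun hΓ j
          simp [single, hj] at h3
          exact h3
      rw [DerSub.zero_inv hsub hΓ', add_zero]
      exact ⟨c₁, hd⟩

end Sub
section Subst
variable {D : Type} {i : Multiset D × D → D} {n m : ℕ}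

lemma env_add_eq_zero {Γ₁ Γ₂ : Env D n} (h : Γ₁ + Γ₂ = 0) : Γ₁ = 0 ∧ Γ₂ = 0 := by
  constructor <;> funext j
  · have h0 := congrFun h j
    simp only [Pi.add_apply, Pi.zero_apply] at h0 ⊢
    exact Multiset.le_zero.mp (h0 ▸ le_add_right (le_refl (Γ₁ j)))
  · have h0 := congrFun h j
    simp only [Pi.add_apply, Pi.zero_apply] at h0 ⊢
    exact Multiset.le_zero.mp (h0 ▸ le_add_left (le_refl (Γ₂ j)))

lemma erase_add_single [DecidableEq D] {s : Multiset D} {β : D} (h : β ∈ s) :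
    s.erase β + {β} = s := by
  rw [add_comm, Multiset.singleton_add, Multiset.cons_erase h]

lemma DerSub.split {σ : Fin n → Tm m} {Γ : Env D n} {Δ : Env D m}
    (h : DerSub i σ Γ Δ) : ∀ Γ₁ Γ₂, Γ = Γ₁ + Γ₂ →
    ∃ Δ₁ Δ₂, Δ = Δ₁ + Δ₂ ∧ DerSub i σ Γ₁ Δ₁ ∧ DerSub i σ Γ₂ Δ₂ := by
  classical
  induction h with
  | nil =>
      intro Γ₁ Γ₂ hEq
      obtain ⟨h1, h2⟩ := env_add_eq_zero hEq.symm
      exact ⟨0, 0, by simp, h1 ▸ DerSub.nil, h2 ▸ DerSub.nil⟩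
  | @cons Γ Δ₂ k β Δ₁ c₁ hd hsub ih =>
      intro Γ₁ Γ₂ hEq
      have hmem : β ∈ Γ₁ k ∨ β ∈ Γ₂ k := by
        rw [← Multiset.mem_add]
        have := congrFun hEq k
        simp only [Pi.add_apply, single, if_pos rfl] at this
        rw [← this]
        simp
      rcases hmem with hβ | hβ
      · set Γ₁' : Env D n := fun j => if j = k then (Γ₁ k).erase β else Γ₁ j with hΓ₁'
        have e1 : Γ₁' + single k β = Γ₁ := by
          funext j
          by_cases hj : j = k
          · subst hj
            simp only [Pi.add_apply, hΓ₁', single, if_pos rfl]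
            exact erase_add_single hβ
          · simp [hΓ₁', single, hj]
        have e2 : Γ = Γ₁' + Γ₂ := by
          have : Γ + single k β = (Γ₁' + Γ₂) + single k β := by
            rw [hEq, ← e1, add_right_comm]
          exact add_right_cancel this
        obtain ⟨Δ₁', Δ₂', rfl, s1, s2⟩ := ih Γ₁' Γ₂ e2
        refine ⟨Δ₁ + Δ₁', Δ₂', by rw [add_assoc], ?_, s2⟩
        rw [← e1]
        exact DerSub.cons k β hd s1
      · set Γ₂' : Env D n := fun j => if j = k then (Γ₂ k).erase β else Γ₂ j with hΓ₂'
        have e1 : Γ₂' + single k β = Γ₂ := by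
          funext j
          by_cases hj : j = k
          · subst hj
            simp only [Pi.add_apply, hΓ₂', single, if_pos rfl]
            exact erase_add_single hβ
          · simp [hΓ₂', single, hj]
        have e2 : Γ = Γ₁ + Γ₂' := by
          have : Γ + single k β = (Γ₁ + Γ₂') + single k β := by
            rw [hEq, ← e1, add_assoc]
          exact add_right_cancel this
        obtain ⟨Δ₁', Δ₂', rfl, s1, s2⟩ := ih Γ₁ Γ₂' e2
        refine ⟨Δ₁', Δ₁ + Δ₂', by rw [add_left_comm], s1, ?_⟩
        rw [← e1]
        exact DerSub.cons k β hd s2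

lemma liftσ_zero (σ : Fin n → Tm m) : liftσ σ 0 = .var 0 := rfl

lemma liftσ_succ (σ : Fin n → Tm m) (k : Fin n) :
    liftσ σ k.succ = (σ k).rename Fin.succ := rfl

lemma DerSub.lift0 {σ : Fin n → Tm m} {Γ : Env D n} {Δ : Env D m}
    (h : DerSub i σ Γ Δ) : DerSub i (liftσ σ) (Fin.cons 0 Γ) (Fin.cons 0 Δ) := by
  induction h with
  | nil => rw [cons_zero_zero, cons_zero_zero]; exact DerSub.nil
  | @cons Γ Δ₂ k β Δ₁ c₁ hd hsub ih =>
      have hd' : Der i (Fin.cons 0 Δ₁) (liftσ σ k.succ) β c₁ := by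
        rw [liftσ_succ, ← ren_succ]
        exact hd.rename Fin.succ
      have e1 : (Fin.cons 0 (Γ + single k β) : Env D (n+1))
          = Fin.cons 0 Γ + single k.succ β := by
        rw [single_succ, cons_add_cons]; simp
      have e2 : (Fin.cons 0 (Δ₁ + Δ₂) : Env D (m+1))
          = Fin.cons 0 Δ₁ + Fin.cons 0 Δ₂ := by
        rw [cons_add_cons]; simp
      rw [e1, e2]
      exact DerSub.cons k.succ β hd' ih

lemma DerSub.lift {σ : Fin n → Tm m} {Γ : Env D n} {Δ : Env D m}
    (h : DerSub i σ Γ Δ) (a : Multiset D) :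
    DerSub i (liftσ σ) (Fin.cons a Γ) (Fin.cons a Δ) := by
  induction a using Multiset.induction with
  | empty => exact h.lift0
  | cons β a ih =>
      have e1 : (Fin.cons (β ::ₘ a) Γ : Env D (n+1)) = Fin.cons a Γ + single 0 β := by
        funext j
        refine Fin.cases ?_ (fun j => ?_) j
        · simp only [Pi.add_apply, Fin.cons_zero]
          have hs : single (0 : Fin (n+1)) β 0 = {β} := by simp [single]
          rw [hs, add_comm, Multiset.singleton_add]
        · simp [single, Fin.succ_ne_zero]
      have e2 : (Fin.cons (β ::ₘ a) Δ : Env D (m+1)) = single 0 β + Fin.cons a Δ := by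
        funext j
        refine Fin.cases ?_ (fun j => ?_) j
        · simp only [Pi.add_apply, Fin.cons_zero]
          have hs : single (0 : Fin (m+1)) β 0 = {β} := by simp [single]
          rw [hs, Multiset.singleton_add]
        · simp [single, Fin.succ_ne_zero]
      rw [e1, e2]
      exact DerSub.cons 0 β (liftσ_zero σ ▸ Der.var (0 : Fin (m+1)) β) ih

theorem der_subst {Γ : Env D n} {M : Tm n} {α : D} {c : ℕ} (h : Der i Γ M α c) :
    ∀ {m : ℕ} (σ : Fin n → Tm m) (Δ : Env D m), DerSub i σ Γ Δ →
    ∃ c', Der i Δ (M.subst σ) α c' := by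
  induction h with
  | var k α => intro m σ Δ hs; exact hs.single_inv k α rfl
  | lam h ih =>
      intro m σ Δ hs
      obtain ⟨c', h'⟩ := ih (liftσ σ) _ (hs.lift _)
      exact ⟨c', by rw [subst_lam]; exact Der.lam h'⟩
  | @app n Γ M N α c l hM hN ihM ihN =>
      intro m σ Δ hs
      obtain ⟨Δ₀, Δr, rfl, hs₀, hsr⟩ := hs.split Γ ((l.map fun q => q.1).sum) rfl
      obtain ⟨c₀, hM'⟩ := ihM σ Δ₀ hs₀
      have aux : ∀ (l : List (Env D n × D × ℕ)),
          (∀ q ∈ l, ∀ Δ' : Env D m, DerSub i σ q.1 Δ' →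
            ∃ c', Der i Δ' (N.subst σ) q.2.1 c') →
          ∀ Δr : Env D m, DerSub i σ ((l.map fun q => q.1).sum) Δr →
          ∃ l' : List (Env D m × D × ℕ),
            (∀ q ∈ l', Der i q.1 (N.subst σ) q.2.1 q.2.2) ∧
            ((l'.map fun q => q.2.1) = l.map fun q => q.2.1) ∧
            (l'.map fun q => q.1).sum = Δr := by
        intro l
        induction l with
        | nil =>
            intro _ Δr hr
            exact ⟨[], by simp, by simp, (hr.zero_inv (by simp)).symm⟩
        | cons q l ihl =>
            intro hders Δr hr
            obtain ⟨Δq, Δr', rfl, hq, hr'⟩ :=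
              hr.split q.1 ((l.map fun q => q.1).sum) (by simp)
            obtain ⟨cq, hdq⟩ := hders q (by simp) Δq hq
            obtain ⟨l', h1, h2, h3⟩ := ihl (fun q' hq' => hders q' (by simp [hq'])) Δr' hr'
            refine ⟨(Δq, q.2.1, cq) :: l', ?_, by simp [h2], by simp [h3]⟩
            intro q' hq'
            rcases List.mem_cons.1 hq' with rfl | hmem
            · exact hdq
            · exact h1 _ hmem
      obtain ⟨l', h1, h2, h3⟩ := aux l (fun q hq Δ' hΔ => ihN q hq σ Δ' hΔ) Δr hsr
      have happ := Der.app (i := i) l' (by rw [h2]; exact hM') h1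
      rw [h3] at happ
      exact ⟨_, happ⟩

end Subst
section Unsubst
variable {D : Type} {i : Multiset D × D → D} {n m : ℕ}

theorem der_unrename : ∀ {n : ℕ} (M : Tm n) {m : ℕ} (f : Fin n → Fin m)
    (Δ : Env D m) (α : D) (c : ℕ), Der i Δ (M.rename f) α c →
    ∃ Γ, Δ = ren f Γ ∧ Der i Γ M α c := by
  intro n M
  induction M with
  | var k =>
      intro m f Δ α c h
      obtain ⟨rfl, rfl⟩ := der_var_inv h
      exact ⟨single k α, (ren_single f k α).symm, Der.var k α⟩
  | @lam n M ih =>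
      intro m f Δ α c h
      rw [rename_lam] at h
      obtain ⟨a, α', rfl, h'⟩ := der_lam_inv h
      obtain ⟨Γ₀, hΓ₀, hder⟩ := ih (liftf f) _ _ _ h'
      rw [← Fin.cons_self_tail Γ₀, ren_liftf_cons] at hΓ₀
      have ha : a = Γ₀ 0 := by
        have := congrFun hΓ₀ 0
        simpa using this
      have hΔ : Δ = ren f (Fin.tail Γ₀) := by
        funext j
        have := congrFun hΓ₀ j.succ
        simpa using this
      refine ⟨Fin.tail Γ₀, hΔ, Der.lam ?_⟩
      rw [ha, Fin.cons_self_tail]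
      exact hder
  | @app n P Q ihP ihQ =>
      intro m f Δ α c h
      obtain ⟨Δ₀, l, c₀, rfl, rfl, hP, hQ⟩ := der_app_inv h
      obtain ⟨Γ₀, rfl, hPder⟩ := ihP f _ _ _ hP
      have aux : ∀ l : List (Env D m × D × ℕ),
          (∀ q ∈ l, Der i q.1 (Q.rename f) q.2.1 q.2.2) →
          ∃ l' : List (Env D n × D × ℕ),
            (∀ q ∈ l', Der i q.1 Q q.2.1 q.2.2) ∧
            l'.map (fun q => (ren f q.1, q.2.1, q.2.2)) = l := by
        intro l
        induction l with
        | nil => exact fun _ => ⟨[], by simp, rfl⟩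
        | cons q l ihl =>
            intro hders
            obtain ⟨Γq, hq1, hq2⟩ := ihQ f _ _ _ (hders q (by simp))
            obtain ⟨l', h1, h2⟩ := ihl (fun q' hq' => hders q' (by simp [hq']))
            refine ⟨(Γq, q.2.1, q.2.2) :: l', ?_, by simp [h2, ← hq1]⟩
            intro q' hq'
            rcases List.mem_cons.1 hq' with rfl | hmem
            · exact hq2
            · exact h1 _ hmem
      obtain ⟨l', h1, h2⟩ := aux l hQ
      have e1 : (l.map fun q => q.2.1) = l'.map fun q => q.2.1 := by
        rw [← h2]; simp [List.map_map]
      have e2 : (l.map fun q => q.1) = (l'.map fun q => q.1).map (ren f) := by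
        rw [← h2]; simp [List.map_map]
      have e3 : (l.map fun q => q.2.2) = l'.map fun q => q.2.2 := by
        rw [← h2]; simp [List.map_map]
      refine ⟨Γ₀ + (l'.map fun q => q.1).sum, ?_, ?_⟩
      · rw [ren_add, e2, ren_listsum]
      · rw [e3]
        exact Der.app l' (by rw [← e1]; exact hPder) h1
  | bot =>
      intro m f Δ α c h
      exact absurd h (fun h => der_bot_inv h)

lemma tail_add_singleZero (Γ : Env D (n+1)) (β : D) :
    Fin.tail (Γ + single 0 β) = Fin.tail Γ := by
  funext j
  simp [Fin.tail, single, Fin.succ_ne_zero]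

lemma tail_add_singleSucc (Γ : Env D (n+1)) (j : Fin n) (β : D) :
    Fin.tail (Γ + single j.succ β) = Fin.tail Γ + single j β := by
  funext j'
  simp [Fin.tail, single, Fin.succ_inj]

lemma tail_zero : Fin.tail (0 : Env D (n+1)) = 0 := by
  funext j; simp [Fin.tail]

lemma dersub_unlift {σ : Fin n → Tm m} {Γ' : Env D (n+1)} {Δt : Env D (m+1)}
    (h : DerSub i (liftσ σ) Γ' Δt) :
    ∃ Δ', Δt = Fin.cons (Γ' 0) Δ' ∧ DerSub i σ (Fin.tail Γ') Δ' := by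
  induction h with
  | nil =>
      refine ⟨0, ?_, ?_⟩
      · rw [show ((0 : Env D (n+1)) 0) = 0 from rfl, cons_zero_zero]
      · rw [tail_zero]; exact DerSub.nil
  | @cons Γ Δ₂ k β Δ₁ c₁ hd hsub ih =>
      obtain ⟨Δ₂', rfl, hsub'⟩ := ih
      rcases Fin.eq_zero_or_eq_succ k with rfl | ⟨j, rfl⟩
      · rw [liftσ_zero] at hd
        obtain ⟨rfl, rfl⟩ := der_var_inv hd
        refine ⟨Δ₂', ?_, ?_⟩
        · funext j'
          refine Fin.cases ?_ (fun j' => ?_) j'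
          · simp [single, add_comm]
          · simp [single, Fin.succ_ne_zero]
        · rw [tail_add_singleZero]; exact hsub'
      · rw [liftσ_succ] at hd
        obtain ⟨Δ₁'', rfl, hder⟩ := der_unrename (σ j) Fin.succ _ _ _ hd
        rw [ren_succ]
        refine ⟨Δ₁'' + Δ₂', ?_, ?_⟩
        · rw [cons_add_cons, zero_add]
          simp [single, (Fin.succ_ne_zero j).symm]
        · rw [tail_add_singleSucc]
          exact DerSub.cons j β hder hsub'

theorem der_unsubst : ∀ {n : ℕ} (M : Tm n) {m : ℕ} (σ : Fin n → Tm m)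
    (Δ : Env D m) (α : D) (c : ℕ), Der i Δ (M.subst σ) α c →
    ∃ Γ, DerSub i σ Γ Δ ∧ ∃ c', Der i Γ M α c' := by
  intro n M
  induction M with
  | var k =>
      intro m σ Δ α c h
      refine ⟨single k α, ?_, 0, Der.var k α⟩
      have := DerSub.cons (i := i) (σ := σ) k α h DerSub.nil
      rwa [zero_add, add_zero] at this
  | @lam n M ih =>
      intro m σ Δ α c h
      rw [subst_lam] at h
      obtain ⟨a, α', rfl, h'⟩ := der_lam_inv h
      obtain ⟨Γ', hsub, c', hder⟩ := ih (liftσ σ) _ _ _ h'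
      obtain ⟨Δ', hΔ, hsub'⟩ := dersub_unlift hsub
      have ha : a = Γ' 0 ∧ Δ = Δ' := by
        constructor
        · have := congrFun hΔ 0; simpa using this
        · funext j; have := congrFun hΔ j.succ; simpa using this
      obtain ⟨rfl, rfl⟩ := ha
      refine ⟨Fin.tail Γ', hsub', c', Der.lam ?_⟩
      rw [Fin.cons_self_tail]
      exact hder
  | @app n P Q ihP ihQ =>
      intro m σ Δ α c h
      obtain ⟨Δ₀, l, c₀, rfl, rfl, hP, hQ⟩ := der_app_inv h
      obtain ⟨Γ₀, hsub₀, c₀', hPder⟩ := ihP σ _ _ _ hP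
      have aux : ∀ l : List (Env D m × D × ℕ),
          (∀ q ∈ l, Der i q.1 (Q.subst σ) q.2.1 q.2.2) →
          ∃ l' : List (Env D n × D × ℕ),
            (∀ q ∈ l', Der i q.1 Q q.2.1 q.2.2) ∧
            ((l'.map fun q => q.2.1) = l.map fun q => q.2.1) ∧
            DerSub i σ ((l'.map fun q => q.1).sum) ((l.map fun q => q.1).sum) := by
        intro l
        induction l with
        | nil => exact fun _ => ⟨[], by simp, by simp, by simp; exact DerSub.nil⟩
        | cons q l ihl =>
            intro hders
            obtain ⟨Γq, hq1, cq, hq2⟩ := ihQ σ _ _ _ (hders q (by simp))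
            obtain ⟨l', h1, h2, h3⟩ := ihl (fun q' hq' => hders q' (by simp [hq']))
            refine ⟨(Γq, q.2.1, cq) :: l', ?_, by simp [h2], ?_⟩
            · intro q' hq'
              rcases List.mem_cons.1 hq' with rfl | hmem
              · exact hq2
              · exact h1 _ hmem
            · simpa using DerSub.append hq1 h3
      obtain ⟨l', h1, h2, h3⟩ := aux l hQ
      refine ⟨Γ₀ + (l'.map fun q => q.1).sum, DerSub.append hsub₀ h3, _,
        Der.app l' (by rw [h2]; exact hPder) h1⟩
  | bot =>
      intro m σ Δ α c h
      exact absurd h (fun h => der_bot_inv h)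

end Unsubst
section BetaStep
variable {D : Type} {i : Multiset D × D → D} {n : ℕ}

lemma env_decomp (Γ : Env D n) (h : Γ ≠ 0) :
    ∃ (Γ' : Env D n) (k : Fin n) (β : D), Γ = Γ' + single k β ∧
      (∑ j, (Γ' j).card) + 1 = ∑ j, (Γ j).card := by
  classical
  have hk : ∃ k, Γ k ≠ 0 := by
    by_contra hno
    push_neg at hno
    exact h (funext hno)
  obtain ⟨k, hk⟩ := hk
  obtain ⟨β, hβ⟩ := Multiset.exists_mem_of_ne_zero hk
  refine ⟨fun j => if j = k then (Γ k).erase β else Γ j, k, β, ?_, ?_⟩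
  · funext j
    by_cases hj : j = k
    · subst hj
      simp only [Pi.add_apply, if_pos rfl, single, if_pos rfl]
      exact (erase_add_single hβ).symm
    · simp [single, hj]
  · have : ∀ j : Fin n, ((if j = k then (Γ k).erase β else Γ j).card
        + if j = k then 1 else 0) = (Γ j).card := by
      intro j
      by_cases hj : j = k
      · subst hj
        simp [Multiset.card_erase_of_mem hβ]
        have := Multiset.card_pos.2 hk
        omega
      · simp [hj]
    calc (∑ j, ((if j = k then (Γ k).erase β else Γ j)).card) + 1
        = ∑ j, (((if j = k then (Γ k).erase β else Γ j)).card + if j = k then 1 else 0) := by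
          rw [Finset.sum_add_distrib]
          simp
      _ = ∑ j, (Γ j).card := Finset.sum_congr rfl (fun j _ => this j)

lemma dersub_beta_vars (N : Tm n) :
    ∀ (s : ℕ) (Γ : Env D n), (∑ j, (Γ j).card) = s →
    DerSub i (Fin.cases (motive := fun _ => Tm n) N Tm.var) (Fin.cons 0 Γ) Γ := by
  intro s
  induction s using Nat.strong_induction_on with
  | _ s ih =>
    intro Γ hs
    by_cases h0 : Γ = 0
    · subst h0
      rw [cons_zero_zero]
      exact DerSub.nil
    · obtain ⟨Γ', k, β, rfl, hcard⟩ := env_decomp Γ h0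
      have hvar : Der i (single k β)
          ((Fin.cases (motive := fun _ => Tm n) N Tm.var) k.succ) β 0 := by
        rw [Fin.cases_succ]
        exact Der.var k β
      have hrec := ih (∑ j, (Γ' j).card) (by omega) Γ' rfl
      have := DerSub.cons k.succ β hvar hrec
      have e1 : Fin.cons (0 : Multiset D) Γ' + single k.succ β
          = Fin.cons 0 (Γ' + single k β) := by
        rw [single_succ, cons_add_cons, add_zero]
      rw [e1, add_comm (single k β) Γ'] at this
      exact this

lemma dersub_beta_args (N : Tm n) (l : List (Env D n × D × ℕ))
    (hN : ∀ q ∈ l, Der i q.1 N q.2.1 q.2.2) :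
    DerSub i (Fin.cases (motive := fun _ => Tm n) N Tm.var)
      (Fin.cons (↑(l.map fun q => q.2.1)) (0 : Env D n)) ((l.map fun q => q.1).sum) := by
  induction l with
  | nil =>
      simp only [List.map_nil, List.sum_nil]
      rw [show ((↑([] : List D) : Multiset D)) = 0 from rfl, cons_zero_zero]
      exact DerSub.nil
  | cons q l ihl =>
      have hq : Der i q.1 ((Fin.cases (motive := fun _ => Tm n) N Tm.var) 0) q.2.1 q.2.2 := by
        rw [Fin.cases_zero]; exact hN q (by simp)
      have hrec := ihl (fun q' hq' => hN q' (by simp [hq']))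
      have := DerSub.cons 0 q.2.1 hq hrec
      have e1 : Fin.cons (↑(l.map fun q => q.2.1)) (0 : Env D n) + single 0 q.2.1
          = Fin.cons (↑((q :: l).map fun q => q.2.1)) (0 : Env D n) := by
        funext j
        refine Fin.cases ?_ (fun j => ?_) j
        · simp [single]
          rw [add_comm, Multiset.singleton_add]
          rfl
        · simp [single, Fin.succ_ne_zero]
      rw [e1] at this
      simpa using this

lemma dersub_beta (N : Tm n) (l : List (Env D n × D × ℕ))
    (hN : ∀ q ∈ l, Der i q.1 N q.2.1 q.2.2) (Γ₀ : Env D n) :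
    DerSub i (Fin.cases (motive := fun _ => Tm n) N Tm.var)
      (Fin.cons (↑(l.map fun q => q.2.1)) Γ₀) (Γ₀ + (l.map fun q => q.1).sum) := by
  have h1 := dersub_beta_args (i := i) N l hN
  have h2 := dersub_beta_vars (i := i) N _ Γ₀ rfl
  have := DerSub.append h1 h2
  rw [cons_add_cons, add_zero, zero_add,
    add_comm ((l.map fun q => q.1).sum) Γ₀] at this
  exact this

lemma dersub_beta_inv {N : Tm n} {Γ' : Env D (n+1)} {Δ : Env D n}
    (h : DerSub i (Fin.cases (motive := fun _ => Tm n) N Tm.var) Γ' Δ) :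
    ∃ l : List (Env D n × D × ℕ), (↑(l.map fun q => q.2.1) : Multiset D) = Γ' 0 ∧
      (∀ q ∈ l, Der i q.1 N q.2.1 q.2.2) ∧
      Δ = Fin.tail Γ' + (l.map fun q => q.1).sum := by
  induction h with
  | nil =>
      refine ⟨[], rfl, by simp, ?_⟩
      rw [tail_zero]
      simp
  | @cons Γ Δ₂ k β Δ₁ c₁ hd hsub ih =>
      obtain ⟨l, e1, hders, rfl⟩ := ih
      rcases Fin.eq_zero_or_eq_succ k with rfl | ⟨j, rfl⟩
      · rw [Fin.cases_zero] at hd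
        refine ⟨(Δ₁, β, c₁) :: l, ?_, ?_, ?_⟩
        · simp only [List.map_cons]
          rw [show ((↑(β :: l.map fun q => q.2.1) : Multiset D))
              = β ::ₘ ↑(l.map fun q => q.2.1) from rfl, e1, Pi.add_apply]
          have hx : single (0 : Fin (n+1)) β 0 = {β} := by simp [single]
          rw [hx, add_comm (Γ 0) ({β} : Multiset D), Multiset.singleton_add]
        · intro q' hq'
          rcases List.mem_cons.1 hq' with rfl | hmem
          · exact hd
          · exact hders _ hmem
        · rw [tail_add_singleZero]
          simp only [List.map_cons, List.sum_cons]
          rw [add_left_comm]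
      · rw [Fin.cases_succ] at hd
        obtain ⟨rfl, rfl⟩ := der_var_inv hd
        refine ⟨l, ?_, hders, ?_⟩
        · rw [e1]; simp [single, (Fin.succ_ne_zero j).symm]
        · rw [tail_add_singleSucc]
          abel

theorem subject_reduction (hinj : Function.Injective i) :
    ∀ {n : ℕ} {M M' : Tm n}, Beta M M' → ∀ {Γ : Env D n} {α : D} {c : ℕ},
    Der i Γ M α c → ∃ c', Der i Γ M' α c' := by
  intro n M M' hβ
  induction hβ with
  | redex M N =>
      intro Γ α c h
      obtain ⟨Γ₀, l, c₀, rfl, rfl, hM, hN⟩ := der_app_inv h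
      obtain ⟨a, α', hty, hM'⟩ := der_lam_inv hM
      have hpair := hinj hty
      have ha : a = ↑(l.map fun q => q.2.1) := (congrArg Prod.fst hpair).symm
      have hα : α' = α := (congrArg Prod.snd hpair).symm
      subst ha; subst hα
      exact der_subst hM' _ _ (dersub_beta N l hN Γ₀)
  | appL hβ ih =>
      intro Γ α c h
      obtain ⟨Γ₀, l, c₀, rfl, rfl, hM, hN⟩ := der_app_inv h
      obtain ⟨c', hM'⟩ := ih hM
      exact ⟨_, Der.app l hM' hN⟩
  | @appR n M N N' hβ ih =>
      intro Γ α c h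
      obtain ⟨Γ₀, l, c₀, rfl, rfl, hM, hN⟩ := der_app_inv h
      have aux : ∀ l : List (Env D n × D × ℕ),
          (∀ q ∈ l, Der i q.1 N q.2.1 q.2.2) →
          ∃ l' : List (Env D n × D × ℕ),
            (∀ q ∈ l', Der i q.1 N' q.2.1 q.2.2) ∧
            ((l'.map fun q => q.2.1) = l.map fun q => q.2.1) ∧
            ((l'.map fun q => q.1) = l.map fun q => q.1) := by
        intro l
        induction l with
        | nil => exact fun _ => ⟨[], by simp, rfl, rfl⟩
        | cons q l ihl =>
            intro hders
            obtain ⟨cq, hq⟩ := ih (hders q (by simp))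
            obtain ⟨l', h1, h2, h3⟩ := ihl (fun q' hq' => hders q' (by simp [hq']))
            refine ⟨(q.1, q.2.1, cq) :: l', ?_, by simp [h2], by simp [h3]⟩
            intro q' hq'
            rcases List.mem_cons.1 hq' with rfl | hmem
            · exact hq
            · exact h1 _ hmem
      obtain ⟨l', h1, h2, h3⟩ := aux l hN
      have := Der.app (i := i) l' (by rw [h2]; exact hM) h1
      rw [h3] at this
      exact ⟨_, this⟩
  | lam hβ ih =>
      intro Γ α c h
      obtain ⟨a, α', rfl, h'⟩ := der_lam_inv h
      obtain ⟨c', h''⟩ := ih h'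
      exact ⟨c', Der.lam h''⟩

theorem subject_expansion :
    ∀ {n : ℕ} {M M' : Tm n}, Beta M M' → ∀ {Γ : Env D n} {α : D} {c : ℕ},
    Der i Γ M' α c → ∃ c', Der i Γ M α c' := by
  intro n M M' hβ
  induction hβ with
  | @redex n M N =>
      intro Γ α c h
      obtain ⟨Γ', hsub, c', hder⟩ := der_unsubst M _ _ _ _ h
      obtain ⟨l, e1, hders, rfl⟩ := dersub_beta_inv hsub
      have hlam : Der i (Fin.tail Γ') (.lam M) (i (↑(l.map fun q => q.2.1), α)) c' := by
        apply Der.lam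
        rw [e1, Fin.cons_self_tail]
        exact hder
      exact ⟨_, Der.app l hlam hders⟩
  | appL hβ ih =>
      intro Γ α c h
      obtain ⟨Γ₀, l, c₀, rfl, rfl, hM, hN⟩ := der_app_inv h
      obtain ⟨c', hM'⟩ := ih hM
      exact ⟨_, Der.app l hM' hN⟩
  | @appR n M N N' hβ ih =>
      intro Γ α c h
      obtain ⟨Γ₀, l, c₀, rfl, rfl, hM, hN⟩ := der_app_inv h
      have aux : ∀ l : List (Env D n × D × ℕ),
          (∀ q ∈ l, Der i q.1 N' q.2.1 q.2.2) →
          ∃ l' : List (Env D n × D × ℕ),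
            (∀ q ∈ l', Der i q.1 N q.2.1 q.2.2) ∧
            ((l'.map fun q => q.2.1) = l.map fun q => q.2.1) ∧
            ((l'.map fun q => q.1) = l.map fun q => q.1) := by
        intro l
        induction l with
        | nil => exact fun _ => ⟨[], by simp, rfl, rfl⟩
        | cons q l ihl =>
            intro hders
            obtain ⟨cq, hq⟩ := ih (hders q (by simp))
            obtain ⟨l', h1, h2, h3⟩ := ihl (fun q' hq' => hders q' (by simp [hq']))
            refine ⟨(q.1, q.2.1, cq) :: l', ?_, by simp [h2], by simp [h3]⟩
            intro q' hq'
            rcases List.mem_cons.1 hq' with rfl | hmem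
            · exact hq
            · exact h1 _ hmem
      obtain ⟨l', h1, h2, h3⟩ := aux l hN
      have := Der.app (i := i) l' (by rw [h2]; exact hM) h1
      rw [h3] at this
      exact ⟨_, this⟩
  | lam hβ ih =>
      intro Γ α c h
      obtain ⟨a, α', rfl, h'⟩ := der_lam_inv h
      obtain ⟨c', h''⟩ := ih h'
      exact ⟨c', Der.lam h''⟩

theorem eqvgen_typable (hinj : Function.Injective i) {n : ℕ} {M N : Tm n}
    (h : Relation.EqvGen (fun a b : Tm n => Beta a b) M N) (Γ : Env D n) (α : D) :
    (∃ c, Der i Γ M α c) ↔ (∃ c, Der i Γ N α c) := by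
  induction h with
  | rel a b hab =>
      exact ⟨fun ⟨c, hc⟩ => subject_reduction hinj hab hc,
        fun ⟨c, hc⟩ => subject_expansion hab hc⟩
  | refl a => exact Iff.rfl
  | symm a b _ ih => exact ih.symm
  | trans a b c _ _ ih₁ ih₂ => exact ih₁.trans ih₂
end BetaStep
section ModelE

def mkE (t : PreE) : ETy := Quotient.mk ESetoid t

def splitE : PreE → ℕ ⊕ (Multiset ETy × ETy)
  | .atom n => .inl n
  | .node l t => .inr (((l.map mkE : List ETy) : Multiset ETy), mkE t)

lemma splitE_eqv {s t : PreE} (h : EqvE s t) : splitE s = splitE t := by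
  induction h with
  | refl t => rfl
  | symm _ ih => exact ih.symm
  | trans _ _ ih₁ ih₂ => exact ih₁.trans ih₂
  | @perm l₁ l₂ t hp =>
      simp only [splitE]
      have h1 : ((l₁.map mkE : List ETy) : Multiset ETy) = ((l₂.map mkE : List ETy)) :=
        Quot.sound (hp.map _)
      rw [h1]
  | @congHead l t₁ t₂ h _ =>
      simp only [splitE]
      rw [show mkE t₁ = mkE t₂ from Quotient.sound h]
  | @congArg x y l t h _ =>
      simp only [splitE, List.map_cons]
      rw [show mkE x = mkE y from Quotient.sound h]

def splitQ : ETy → ℕ ⊕ (Multiset ETy × ETy) :=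
  Quotient.lift splitE (fun _ _ h => splitE_eqv h)

lemma splitQ_arrE (p : Multiset ETy × ETy) : splitQ (arrE p) = .inr p := by
  show splitE (PreE.node (p.1.toList.map Quotient.out) p.2.out) = _
  simp only [splitE, List.map_map]
  have h1 : p.1.toList.map (mkE ∘ Quotient.out) = p.1.toList :=
    (List.map_congr_left fun x _ => Quotient.out_eq x).trans (List.map_id _)
  have h2 : ((((p.1.toList.map Quotient.out).map mkE : List ETy)) : Multiset ETy) = p.1 :=
    (congrArg (fun l : List ETy => (l : Multiset ETy)) (List.map_map.trans h1)).trans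
      (Multiset.coe_toList _)
  exact congrArg Sum.inr (Prod.ext h2 (Quotient.out_eq p.2))

lemma arrE_inj : Function.Injective arrE := fun p q h => by
  have h2 := congrArg splitQ h
  rw [splitQ_arrE, splitQ_arrE] at h2
  exact Sum.inr.inj h2

lemma occ_perm {l₁ l₂ : List PreE} {t : PreE} {p : Bool} (hp : l₁.Perm l₂) :
    Occ p (.node l₁ t) → Occ p (.node l₂ t) := by
  intro h
  cases h with
  | negEmpty =>
      have hl : l₂ = [] := hp.symm.eq_nil
      subst hl
      exact Occ.negEmpty t
  | tail h => exact Occ.tail h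
  | arg hβ hm => exact Occ.arg hβ (hp.subset hm)

lemma occ_head {l : List PreE} {t₁ t₂ : PreE} (ih : ∀ p, Occ p t₁ → Occ p t₂) {p : Bool} :
    Occ p (.node l t₁) → Occ p (.node l t₂) := by
  intro hx
  cases hx with
  | negEmpty => exact Occ.negEmpty _
  | tail hx => exact Occ.tail (ih _ hx)
  | arg hβ hm => exact Occ.arg hβ hm

lemma occ_argc {x y : PreE} {l : List PreE} {t : PreE} (ih : ∀ p, Occ p x → Occ p y)
    {p : Bool} : Occ p (.node (x :: l) t) → Occ p (.node (y :: l) t) := by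
  intro hx
  cases hx with
  | tail hx => exact Occ.tail hx
  | arg hβ hm =>
      rcases List.mem_cons.1 hm with rfl | hmem
      · exact Occ.arg (ih _ hβ) (by simp)
      · exact Occ.arg hβ (by simp [hmem])

lemma occ_eqv {s t : PreE} (h : EqvE s t) : ∀ p, Occ p s ↔ Occ p t := by
  induction h with
  | refl t => exact fun p => Iff.rfl
  | symm _ ih => exact fun p => (ih p).symm
  | trans _ _ ih₁ ih₂ => exact fun p => (ih₁ p).trans (ih₂ p)
  | @perm l₁ l₂ t hp => exact fun p => ⟨occ_perm hp, occ_perm hp.symm⟩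
  | @congHead l t₁ t₂ h ih =>
      exact fun p => ⟨occ_head (fun p => (ih p).mp), occ_head (fun p => (ih p).mpr)⟩
  | @congArg x y l t h ih =>
      exact fun p => ⟨occ_argc (fun p => (ih p).mp), occ_argc (fun p => (ih p).mpr)⟩

lemma occQ_mk {p : Bool} {t : PreE} : OccQ p (Quotient.mk ESetoid t) ↔ Occ p t := by
  constructor
  · rintro ⟨s, hs, hocc⟩
    have he : EqvE t s := Quotient.exact hs
    exact (occ_eqv he p).mpr hocc
  · exact fun h => ⟨t, rfl, h⟩

lemma not_occQ_atom {p : Bool} {k : ℕ} : ¬ OccQ p (Quotient.mk ESetoid (.atom k)) := by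
  rw [occQ_mk]
  intro h
  cases h

lemma occQ_out {p : Bool} {x : ETy} : OccQ p x ↔ Occ p x.out := by
  conv_lhs => rw [← Quotient.out_eq x]
  exact occQ_mk

lemma occQ_arrE {p : Bool} {a : Multiset ETy} {α : ETy} :
    OccQ p (arrE (a, α)) ↔ (p = false ∧ a = 0) ∨ OccQ p α ∨ ∃ b ∈ a, OccQ (!p) b := by
  rw [show arrE (a, α)
      = Quotient.mk ESetoid (.node (a.toList.map Quotient.out) α.out) from rfl, occQ_mk]
  constructor
  · intro h
    generalize hL : a.toList.map Quotient.out = L at h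
    cases h with
    | negEmpty =>
        left
        refine ⟨rfl, ?_⟩
        have h2 : a.toList = [] := List.map_eq_nil_iff.mp hL
        rw [← Multiset.coe_toList a, h2]
        rfl
    | tail h => exact Or.inr (Or.inl (occQ_out.mpr h))
    | arg hβ hm =>
        right; right
        rw [← hL] at hm
        obtain ⟨b, hb, rfl⟩ := List.mem_map.1 hm
        exact ⟨b, (Multiset.mem_toList).1 hb, occQ_out.mpr hβ⟩
  · rintro (⟨rfl, rfl⟩ | h | ⟨b, hb, hocc⟩)
    · rw [Multiset.toList_zero]
      exact Occ.negEmpty _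
    · exact Occ.tail (occQ_out.mp h)
    · exact Occ.arg (occQ_out.mp hocc)
        (List.mem_map.2 ⟨b, Multiset.mem_toList.2 hb, rfl⟩)

end ModelE
section NormalForms

/-- `NF true M`: `M` is a neutral normal form; `NF false M`: `M` is a normal form. -/
inductive NF : Bool → ∀ {n : ℕ}, Tm n → Prop
  | var {n} (k : Fin n) : NF true (.var k)
  | app {n} {M N : Tm n} : NF true M → NF false N → NF true (.app M N)
  | ofNe {n} {M : Tm n} : NF true M → NF false M
  | lam {n} {M : Tm (n+1)} : NF false M → NF false (.lam M)

lemma normal_nf : ∀ {n : ℕ} (M : Tm n), BotFree M → (∀ P, ¬ Beta M P) → NF false M := by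
  intro n M
  induction M with
  | var k => exact fun _ _ => NF.ofNe (NF.var k)
  | lam M ih =>
      intro hb hnr
      exact NF.lam (ih hb (fun P hP => hnr (.lam P) (Beta.lam hP)))
  | app P Q ihP ihQ =>
      intro hb hnr
      have hP := ihP hb.1 (fun P' hP' => hnr (.app P' Q) (Beta.appL hP'))
      have hQ := ihQ hb.2 (fun Q' hQ' => hnr (.app P Q') (Beta.appR hQ'))
      have hPne : NF true P := by
        cases hP with
        | ofNe h => exact h
        | lam h => exact absurd (Beta.redex _ Q) (hnr _)
      exact NF.ofNe (NF.app hPne hQ)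
  | bot => exact fun hb _ => absurd hb (by simp [BotFree])

def EnvGood {n : ℕ} (Γ : Fin n → Multiset ETy) : Prop :=
  ∀ (k : Fin n), ∀ β ∈ Γ k, ¬ OccQ false β

lemma envGood_single {n : ℕ} {k : Fin n} {α : ETy} (hα : ¬ OccQ false α) :
    EnvGood (single k α) := by
  intro j β hβ
  by_cases hj : j = k
  · simp only [single, if_pos hj] at hβ
    rwa [Multiset.mem_singleton.1 hβ]
  · simp [single, hj] at hβ

lemma envGood_add {n : ℕ} {Γ Δ : Fin n → Multiset ETy} (h₁ : EnvGood Γ) (h₂ : EnvGood Δ) :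
    EnvGood (Γ + Δ) := by
  intro k β hβ
  rcases Multiset.mem_add.1 hβ with h | h
  · exact h₁ k β h
  · exact h₂ k β h

theorem nf_typable : ∀ {b : Bool} {n : ℕ} {M : Tm n}, NF b M →
    (b = true → ∀ α : ETy, ¬ OccQ false α →
      ∃ Γ c, Der arrE Γ M α c ∧ EnvGood Γ) ∧
    (b = false → ∃ Γ α c, Der arrE Γ M α c ∧ ¬ OccQ true α ∧ EnvGood Γ) := by
  intro b n M h
  induction h with
  | var k =>
      refine ⟨fun _ α hα => ⟨single k α, 0, Der.var k α, envGood_single hα⟩,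
        fun h => by simp at h⟩
  | @app n M N hM hN ihM ihN =>
      refine ⟨?_, fun h => by simp at h⟩
      intro _ α hα
      obtain ⟨Δ, β, cN, hNder, hNpos, hNenv⟩ := ihN.2 rfl
      have hγ : ¬ OccQ false (arrE ({β}, α)) := by
        rw [occQ_arrE]
        rintro (⟨_, h0⟩ | h | ⟨b', hb', hocc⟩)
        · simp at h0
        · exact hα h
        · rw [Multiset.mem_singleton.1 hb'] at hocc
          exact hNpos hocc
      obtain ⟨Γ, cM, hMder, hMenv⟩ := ihM.1 rfl (arrE ({β}, α)) hγ
      have hMder' : Der arrE Γ M (arrE (↑([(Δ, β, cN)].map fun q => q.2.1), α)) cM := by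
        simpa using hMder
      have happ := Der.app (i := arrE) [(Δ, β, cN)] hMder' (by simpa using hNder)
      have happ' : Der arrE (Γ + Δ) (.app M N) α (cM + cN + 1) := by simpa using happ
      exact ⟨Γ + Δ, _, happ', envGood_add hMenv hNenv⟩
  | ofNe hM ih =>
      refine ⟨fun h => by simp at h, fun _ => ?_⟩
      obtain ⟨Γ, c, hd, henv⟩ := ih.1 rfl (Quotient.mk ESetoid (.atom 0)) not_occQ_atom
      exact ⟨Γ, _, c, hd, not_occQ_atom, henv⟩
  | lam hM ih =>
      refine ⟨fun h => by simp at h, fun _ => ?_⟩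
      obtain ⟨Γ', α, c, hd, hpos, henv⟩ := ih.2 rfl
      refine ⟨Fin.tail Γ', arrE (Γ' 0, α), c, ?_, ?_, ?_⟩
      · exact Der.lam (by rw [Fin.cons_self_tail]; exact hd)
      · rw [occQ_arrE]
        rintro (⟨h, _⟩ | h | ⟨b', hb', hocc⟩)
        · simp at h
        · exact hpos h
        · exact henv 0 b' hb' hocc
      · exact fun k β hβ => henv k.succ β hβ

end NormalForms
/-- If a λ-term is β-normalizable then it is typable in `E` with a type in which the
empty multiset does not occur positively and an environment in whose types the empty
multiset does not occur negatively. -/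
theorem stmt_15 {n : ℕ} (M : Tm n) (hM : BotFree M)
    (hnorm : ∃ N : Tm n, BotFree N ∧
      Relation.EqvGen (fun a b : Tm n => Beta a b) M N ∧ ∀ P, ¬ Beta N P) :
    ∃ (Γ : Fin n → Multiset ETy) (α : ETy) (m : ℕ),
      Der arrE Γ M α m ∧ ¬ OccQ true α ∧
        ∀ (k : Fin n), ∀ β ∈ Γ k, ¬ OccQ false β := by
  obtain ⟨N, hbN, heqv, hnored⟩ := hnorm
  have hnf := normal_nf N hbN hnored
  obtain ⟨Γ, α, c, hd, hpos, henv⟩ := (nf_typable hnf).2 rfl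
  obtain ⟨c', hd'⟩ := (eqvgen_typable arrE_inj heqv Γ α).mpr ⟨c, hd⟩
  exact ⟨Γ, α, c', hd', hpos, henv⟩
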